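/- arXiv:1602.05726 — 3 statements merged into one kernel-verified Lean document; each statement's English description precedes it below -/
import Mathlib

section
/- Let 1 ≤ p < q < ∞, u ∈ L^p + L^q, and Γ_u = {x : |u(x)| > 1}. Then ‖u‖_{L^q(ℝ^N ∖ Γ_u)} − 1 ≤ ‖u‖_{L^p+L^q} and (1 + |Γ_u|^{1/r})^{-1} ‖u‖_{L^p(Γ_u)} ≤ ‖u‖_{L^p+L^q}, where r = pq/(q−p) and |Γ_u| denotes the Lebesgue measure of Γ_u. -/
open MeasureTheory Filter
open scoped ENNReal NNReal


theorem sumNorm_aux (N : ℕ) (p q : ℝ) (hp : 1 ≤ p) (hpq : p < q)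
    (u u₁ u₂ : EuclideanSpace ℝ (Fin N) → ℝ) (huu : u = u₁ + u₂)
    (h1 : MemLp u₁ (ENNReal.ofReal p) volume)
    (h2 : MemLp u₂ (ENNReal.ofReal q) volume) :
    (eLpNorm u (ENNReal.ofReal q) (volume.restrict {x | 1 < |u x|}ᶜ)).toReal - 1
      ≤ (eLpNorm u₁ (ENNReal.ofReal p) volume).toReal +
        (eLpNorm u₂ (ENNReal.ofReal q) volume).toReal ∧
    (1 + (volume {x | 1 < |u x|}).toReal ^ (1 / (p * q / (q - p))))⁻¹ *
        (eLpNorm u (ENNReal.ofReal p) (volume.restrict {x | 1 < |u x|})).toReal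
      ≤ (eLpNorm u₁ (ENNReal.ofReal p) volume).toReal +
        (eLpNorm u₂ (ENNReal.ofReal q) volume).toReal := by
  have hp0 : (0:ℝ) < p := lt_of_lt_of_le one_pos hp
  have hq0 : (0:ℝ) < q := hp0.trans hpq
  have hq1 : (1:ℝ) ≤ q := hp.trans hpq.le
  set P := ENNReal.ofReal p with hPdef
  set Q := ENNReal.ofReal q with hQdef
  have hP0 : P ≠ 0 := (ENNReal.ofReal_pos.mpr hp0).ne'
  have hQ0 : Q ≠ 0 := (ENNReal.ofReal_pos.mpr hq0).ne'
  have hPt : P ≠ ∞ := ENNReal.ofReal_ne_top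
  have hQt : Q ≠ ∞ := ENNReal.ofReal_ne_top
  have hPr : P.toReal = p := ENNReal.toReal_ofReal hp0.le
  have hQr : Q.toReal = q := ENNReal.toReal_ofReal hq0.le
  have hP1 : (1:ℝ≥0∞) ≤ P := by rw [hPdef, ENNReal.one_le_ofReal]; exact hp
  have hQ1 : (1:ℝ≥0∞) ≤ Q := by rw [hQdef, ENNReal.one_le_ofReal]; exact hq1
  have hPQ : P ≤ Q := ENNReal.ofReal_le_ofReal hpq.le
  set Γ : Set (EuclideanSpace ℝ (Fin N)) := {x | 1 < |u x|} with hΓdef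
  have hu_aesm : AEStronglyMeasurable u volume := by
    rw [huu]; exact h1.aestronglyMeasurable.add h2.aestronglyMeasurable
  have hΓnm : NullMeasurableSet Γ volume :=
    nullMeasurableSet_lt aemeasurable_const hu_aesm.norm.aemeasurable
  set B := eLpNorm u₁ P volume with hBdef
  set C := eLpNorm u₂ Q volume with hCdef
  have hBt : B ≠ ∞ := h1.eLpNorm_lt_top.ne
  have hCt : C ≠ ∞ := h2.eLpNorm_lt_top.ne
  -- the truncation m = min 1 |u₁|
  set m : EuclideanSpace ℝ (Fin N) → ℝ := fun x => min 1 |u₁ x| with hmdef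
  have hm_nonneg : ∀ x, 0 ≤ m x := fun x => le_min zero_le_one (abs_nonneg _)
  have hm_aesm : AEStronglyMeasurable m volume := by
    rw [aestronglyMeasurable_iff_aemeasurable]
    exact aemeasurable_const.min h1.aestronglyMeasurable.norm.aemeasurable
  ------------------------------------------------------------------
  -- Claim A
  ------------------------------------------------------------------
  have hA : eLpNorm u Q (volume.restrict Γᶜ) ≤ 1 + B + C := by
    have hae : ∀ᵐ x ∂(volume.restrict Γᶜ), ‖u x‖ ≤ m x + |u₂ x| := by
      filter_upwards [ae_restrict_mem₀ hΓnm.compl] with x hx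
      have hx1 : |u x| ≤ 1 := not_lt.mp hx
      have htri : |u x| ≤ |u₁ x| + |u₂ x| := by
        rw [huu]; exact abs_add_le _ _
      rw [Real.norm_eq_abs]
      rcases le_total 1 (|u₁ x|) with h | h
      · rw [hmdef]; simp only [min_eq_left h]
        exact le_add_of_le_of_nonneg hx1 (abs_nonneg _)
      · rw [hmdef]; simp only [min_eq_right h]; exact htri
    have step1 : eLpNorm u Q (volume.restrict Γᶜ)
        ≤ eLpNorm (m + fun x => |u₂ x|) Q (volume.restrict Γᶜ) :=
      eLpNorm_mono_ae_real hae
    have step2 : eLpNorm (m + fun x => |u₂ x|) Q (volume.restrict Γᶜ)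
        ≤ eLpNorm m Q (volume.restrict Γᶜ) +
          eLpNorm (fun x => |u₂ x|) Q (volume.restrict Γᶜ) :=
      eLpNorm_add_le hm_aesm.restrict
        (h2.aestronglyMeasurable.norm).restrict hQ1
    have habs : eLpNorm (fun x => |u₂ x|) Q (volume.restrict Γᶜ) = eLpNorm u₂ Q (volume.restrict Γᶜ) := by
      simp only [← Real.norm_eq_abs]
      exact eLpNorm_norm u₂
    have step3 : eLpNorm u₂ Q (volume.restrict Γᶜ) ≤ C :=
      eLpNorm_mono_measure _ Measure.restrict_le_self
    have step4 : eLpNorm m Q volume ≤ 1 + B := by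
      set I := ∫⁻ x, (‖u₁ x‖₊ : ℝ≥0∞) ^ p with hIdef
      have hBI : B = I ^ (1/p) := by
        rw [hBdef, eLpNorm_eq_lintegral_rpow_enorm_toReal hP0 hPt, hPr]; rfl
      have hmI : eLpNorm m Q volume ≤ I ^ (1/q) := by
        rw [eLpNorm_eq_lintegral_rpow_enorm_toReal hQ0 hQt, hQr]
        refine ENNReal.rpow_le_rpow ?_ (by positivity)
        refine lintegral_mono fun x => ?_
        have hm1 : (‖m x‖₊ : ℝ≥0∞) ≤ 1 := by
          rw [← ENNReal.coe_one, ENNReal.coe_le_coe]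
          have : ‖m x‖ ≤ 1 := by
            rw [Real.norm_eq_abs, abs_of_nonneg (hm_nonneg x)]
            exact min_le_left _ _
          exact_mod_cast this
        have hmu : (‖m x‖₊ : ℝ≥0∞) ≤ (‖u₁ x‖₊ : ℝ≥0∞) := by
          rw [ENNReal.coe_le_coe]
          have : ‖m x‖ ≤ ‖u₁ x‖ := by
            rw [Real.norm_eq_abs, Real.norm_eq_abs, abs_of_nonneg (hm_nonneg x)]
            exact min_le_right _ _
          exact_mod_cast this
        calc (‖m x‖₊ : ℝ≥0∞) ^ q ≤ (‖m x‖₊ : ℝ≥0∞) ^ p :=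
              ENNReal.rpow_le_rpow_of_exponent_ge hm1 hpq.le
          _ ≤ (‖u₁ x‖₊ : ℝ≥0∞) ^ p := ENNReal.rpow_le_rpow hmu hp0.le
      refine hmI.trans ?_
      rcases le_total I 1 with hI | hI
      · calc I ^ (1/q) ≤ 1 := ENNReal.rpow_le_one hI (by positivity)
          _ ≤ 1 + B := le_self_add
      · calc I ^ (1/q) ≤ I ^ (1/p) :=
              ENNReal.rpow_le_rpow_of_exponent_le hI
                (by apply one_div_le_one_div_of_le hp0 hpq.le)
          _ = B := hBI.symm
          _ ≤ 1 + B := le_add_self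
    have step5 : eLpNorm m Q (volume.restrict Γᶜ) ≤ eLpNorm m Q volume :=
      eLpNorm_mono_measure _ Measure.restrict_le_self
    calc eLpNorm u Q (volume.restrict Γᶜ) ≤ _ := step1
      _ ≤ _ := step2
      _ ≤ (1 + B) + C := by
          rw [habs]
          exact add_le_add (step5.trans step4) step3
      _ = 1 + B + C := rfl
  ------------------------------------------------------------------
  -- finiteness of Γ
  ------------------------------------------------------------------
  have hΓfin : volume Γ < ∞ := by
    have hsub : Γ ⊆ {x | (1/2 : ℝ≥0) ≤ ‖u₁ x‖₊} ∪ {x | (1/2 : ℝ≥0) ≤ ‖u₂ x‖₊} := by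
      intro x hx
      have hx1 : 1 < |u x| := hx
      have htri : |u x| ≤ |u₁ x| + |u₂ x| := by rw [huu]; exact abs_add_le _ _
      by_contra hcon
      simp only [Set.mem_union, Set.mem_setOf_eq, not_or, not_le] at hcon
      obtain ⟨ha, hb⟩ := hcon
      have ha' : ‖u₁ x‖ < 1/2 := by
        have h := ha
        have : (‖u₁ x‖₊ : ℝ) < ((1/2 : ℝ≥0) : ℝ) := by exact_mod_cast h
        simpa using this
      have hb' : ‖u₂ x‖ < 1/2 := by
        have h := hb
        have : (‖u₂ x‖₊ : ℝ) < ((1/2 : ℝ≥0) : ℝ) := by exact_mod_cast h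
        simpa using this
      rw [Real.norm_eq_abs] at ha' hb'
      linarith
    refine (measure_mono hsub).trans_lt ?_
    refine (measure_union_le _ _).trans_lt ?_
    exact ENNReal.add_lt_top.mpr
      ⟨h1.meas_ge_lt_top hP0 hPt (by norm_num), h2.meas_ge_lt_top hQ0 hQt (by norm_num)⟩
  ------------------------------------------------------------------
  -- Claim B
  ------------------------------------------------------------------
  set e : ℝ := 1/p - 1/q with hedef
  have he0 : 0 ≤ e := by
    rw [hedef, sub_nonneg]
    exact one_div_le_one_div_of_le hp0 hpq.le
  have hB2 : eLpNorm u P (volume.restrict Γ) ≤ B + C * (volume Γ) ^ e := by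
    have htri : eLpNorm u P (volume.restrict Γ)
        ≤ eLpNorm u₁ P (volume.restrict Γ) + eLpNorm u₂ P (volume.restrict Γ) := by
      rw [huu]
      exact eLpNorm_add_le h1.aestronglyMeasurable.restrict h2.aestronglyMeasurable.restrict hP1
    have hhold : eLpNorm u₂ P (volume.restrict Γ)
        ≤ eLpNorm u₂ Q (volume.restrict Γ) * (volume.restrict Γ) Set.univ ^ (1/P.toReal - 1/Q.toReal) :=
      eLpNorm_le_eLpNorm_mul_rpow_measure_univ hPQ h2.aestronglyMeasurable.restrict
    rw [Measure.restrict_apply_univ, hPr, hQr] at hhold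
    refine htri.trans (add_le_add (eLpNorm_mono_measure _ Measure.restrict_le_self) ?_)
    refine hhold.trans ?_
    exact mul_le_mul_left (eLpNorm_mono_measure _ Measure.restrict_le_self) _
  ------------------------------------------------------------------
  -- conclude
  ------------------------------------------------------------------
  constructor
  · have hRt : (1 + B + C : ℝ≥0∞) ≠ ∞ := by
      simp [hBt, hCt]
    have := ENNReal.toReal_mono hRt hA
    rw [ENNReal.toReal_add (by simp [hBt]) hCt, ENNReal.toReal_add (by simp) hBt,
      ENNReal.toReal_one] at this
    linarith
  · have hre : 1 / (p * q / (q - p)) = e := by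
      rw [hedef]
      field_simp
    have hpow : volume Γ ^ e ≠ ∞ :=
      (ENNReal.rpow_lt_top_of_nonneg he0 hΓfin.ne).ne
    have hRt : (B + C * volume Γ ^ e : ℝ≥0∞) ≠ ∞ := by
      simp [hBt, ENNReal.mul_ne_top hCt hpow]
    have hD := ENNReal.toReal_mono hRt hB2
    rw [ENNReal.toReal_add hBt (ENNReal.mul_ne_top hCt hpow), ENNReal.toReal_mul,
      ← ENNReal.toReal_rpow] at hD
    set t := (volume Γ).toReal ^ e with htdef
    have ht0 : 0 ≤ t := by
      rw [htdef]; positivity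
    have h1t : (0:ℝ) < 1 + t := by linarith
    rw [hre]
    set B' := B.toReal
    set C' := C.toReal
    have hB'0 : 0 ≤ B' := ENNReal.toReal_nonneg
    have hC'0 : 0 ≤ C' := ENNReal.toReal_nonneg
    rw [inv_mul_le_iff₀ h1t]
    nlinarith [hD]


/-- Gagliardo seminorm squared: `[u]² = ∬ |u(x)-u(y)|²/|x-y|^{N+2s} dx dy`. -/
noncomputable def gag (N : ℕ) (s : ℝ) (u : EuclideanSpace ℝ (Fin N) → ℝ) : ENNReal :=
  ∫⁻ x, ∫⁻ y, ENNReal.ofReal (|u x - u y| ^ 2 / ‖x - y‖ ^ ((N : ℝ) + 2 * s))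

/-- Norm of the sum space `L^p + L^q` on `ℝ^N`. -/
noncomputable def sumNorm (N : ℕ) (p q : ℝ) (u : EuclideanSpace ℝ (Fin N) → ℝ) : ℝ :=
  sInf {r : ℝ | ∃ u₁ u₂ : EuclideanSpace ℝ (Fin N) → ℝ, u = u₁ + u₂ ∧
    MemLp u₁ (ENNReal.ofReal p) volume ∧ MemLp u₂ (ENNReal.ofReal q) volume ∧
    r = (eLpNorm u₁ (ENNReal.ofReal p) volume).toReal +
        (eLpNorm u₂ (ENNReal.ofReal q) volume).toReal}

/-- Gagliardo bilinear form `∬ (u(x)-u(y))(v(x)-v(y))/|x-y|^{N+2s} dx dy`. -/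
noncomputable def gagForm (N : ℕ) (s : ℝ) (u v : EuclideanSpace ℝ (Fin N) → ℝ) : ℝ :=
  ∫ x, ∫ y, (u x - u y) * (v x - v y) / ‖x - y‖ ^ ((N : ℝ) + 2 * s)

/-- Lower bounds for the `L^p+L^q` norm: with `Γ_u = {|u|>1}` and `r = pq/(q-p)`,
`‖u‖_{L^q(Γ_uᶜ)} - 1 ≤ ‖u‖` and `(1+|Γ_u|^{1/r})⁻¹ ‖u‖_{L^p(Γ_u)} ≤ ‖u‖`. -/
theorem sumNorm_lower_bounds (N : ℕ) (p q : ℝ) (hp : 1 ≤ p) (hpq : p < q)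
    (u : EuclideanSpace ℝ (Fin N) → ℝ)
    (hu : ∃ u₁ u₂ : EuclideanSpace ℝ (Fin N) → ℝ, u = u₁ + u₂ ∧
      MemLp u₁ (ENNReal.ofReal p) volume ∧ MemLp u₂ (ENNReal.ofReal q) volume) :
    (eLpNorm u (ENNReal.ofReal q) (volume.restrict {x | 1 < |u x|}ᶜ)).toReal - 1
      ≤ sumNorm N p q u ∧
    (1 + (volume {x | 1 < |u x|}).toReal ^ (1 / (p * q / (q - p))))⁻¹ *
        (eLpNorm u (ENNReal.ofReal p) (volume.restrict {x | 1 < |u x|})).toReal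
      ≤ sumNorm N p q u := by
  obtain ⟨v₁, v₂, hv, hv1, hv2⟩ := hu
  have hne : {r : ℝ | ∃ u₁ u₂ : EuclideanSpace ℝ (Fin N) → ℝ, u = u₁ + u₂ ∧
      MemLp u₁ (ENNReal.ofReal p) volume ∧ MemLp u₂ (ENNReal.ofReal q) volume ∧
      r = (eLpNorm u₁ (ENNReal.ofReal p) volume).toReal +
          (eLpNorm u₂ (ENNReal.ofReal q) volume).toReal}.Nonempty :=
    ⟨_, v₁, v₂, hv, hv1, hv2, rfl⟩
  constructor
  · refine le_csInf hne ?_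
    rintro b ⟨u₁, u₂, huu, h1, h2, rfl⟩
    exact (sumNorm_aux N p q hp hpq u u₁ u₂ huu h1 h2).1
  · refine le_csInf hne ?_
    rintro b ⟨u₁, u₂, huu, h1, h2, rfl⟩
    exact (sumNorm_aux N p q hp hpq u u₁ u₂ huu h1 h2).2
end

section
/- Let g ∈ C¹(ℝ) satisfy |g'(t)| ≤ c₁|t|^{q−1} for |t| ≤ 1 and |g'(t)| ≤ c₁|t|^{p−1} for |t| ≥ 1, with 2 < p < q. Suppose v_j = t_j u_j with t_j = [v_j] → 0, [u_j] = 1, and {u_j} bounded in L^p + L^q, and [v_j]² = ∫ g'(v_j)v_j dx (Nehari identity). Then 1 ≤ c₁ t_j^{q−2} ∫_{|u_j| ≤ 1} |u_j|^q dx + 2c₁ t_j^{p−2} ∫_{|u_j| > 1} |u_j|^p dx, which yields a contradiction as j → ∞; hence inf{[v]² : v ∈ N} > 0 where N is the Nehari manifold. -/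
open MeasureTheory Filter
open scoped ENNReal

lemma real_opt {N s : ℝ} (hs : 0 < s) (hNs : 2 * s < N) {a d m C1 C2 : ℝ}
    (hd : 0 ≤ d) (hm : 0 < m) (hC1 : 0 < C1) (hC2 : 0 < C2)
    (h : ∀ t : ℝ, 0 < t →
      a ≤ C1 * t ^ s * d ^ ((1:ℝ)/2) + C2 * t ^ (-((N - 2*s)/2)) * m) :
    a ≤ (C1 + C2) * m ^ (2*s/N) * d ^ ((N - 2*s)/(2*N)) := by
  have hN : 0 < N := lt_trans (by linarith) hNs
  have he2 : 0 < (N - 2*s)/2 := by linarith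
  rcases eq_or_lt_of_le hd with hd0 | hd0
  · -- d = 0
    have hexp : (0:ℝ) < (N - 2*s)/(2*N) := by
      apply div_pos (by linarith) (by linarith)
    have hrhs : (C1 + C2) * m ^ (2*s/N) * d ^ ((N - 2*s)/(2*N)) = 0 := by
      rw [← hd0, Real.zero_rpow (ne_of_gt hexp), mul_zero]
    rw [hrhs]
    have hstep : ∀ ε : ℝ, 0 < ε → a ≤ 0 + ε := by
      intro ε hε
      set t : ℝ := (C2 * m / ε) ^ ((2:ℝ)/(N - 2*s)) with ht
      have hb : (0:ℝ) < C2 * m / ε := by positivity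
      have htpos : 0 < t := Real.rpow_pos_of_pos hb _
      have hkey := h t htpos
      rw [← hd0, Real.zero_rpow (by norm_num : (1:ℝ)/2 ≠ 0), mul_zero, zero_add] at hkey
      refine hkey.trans ?_
      rw [zero_add, ht, ← Real.rpow_mul hb.le]
      have hexp2 : (2:ℝ)/(N - 2*s) * -((N - 2*s)/2) = -1 := by
        rw [div_mul_eq_mul_div, div_eq_iff (by linarith : (N - 2*s : ℝ) ≠ 0)]
        ring
      rw [hexp2, Real.rpow_neg_one]
      have : C2 * (C2 * m / ε)⁻¹ * m = ε := by
        field_simp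
      rw [this]
    exact le_of_forall_pos_le_add hstep
  · -- d > 0
    set α : ℝ := (N - 2*s)/(2*N) with hα
    set t : ℝ := (m ^ (2:ℝ) / d) ^ ((1:ℝ)/N) with ht
    have hbase : 0 < m ^ (2:ℝ) / d := by positivity
    have htpos : 0 < t := Real.rpow_pos_of_pos hbase _
    have hkey := h t htpos
    have hts : t ^ s = m ^ (2*s/N) * d ^ (-(s/N)) := by
      rw [ht, ← Real.rpow_mul hbase.le,
        show (1:ℝ)/N * s = 2*(s/N) / 2 by ring,
        Real.div_rpow (by positivity) hd0.le, ← Real.rpow_mul hm.le,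
        Real.rpow_neg hd0.le, div_eq_mul_inv]
      ring_nf
    have h1 : C1 * t ^ s * d ^ ((1:ℝ)/2) = C1 * m ^ (2*s/N) * d ^ α := by
      rw [hts, Real.rpow_neg hd0.le, mul_assoc, mul_assoc, mul_assoc, ← Real.rpow_neg hd0.le,
        ← Real.rpow_add hd0, show -(s/N) + (1:ℝ)/2 = α by rw [hα]; field_simp; ring]
    have htm : t ^ (-((N - 2*s)/2)) = m ^ (-(2*α)) * d ^ α := by
      rw [ht, ← Real.rpow_mul hbase.le,
        show (1:ℝ)/N * -((N - 2*s)/2) = -α by rw [hα, mul_neg, neg_inj, div_mul_div_comm, one_mul, mul_comm N 2],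
        Real.rpow_neg hbase.le, Real.div_rpow (by positivity) hd0.le, inv_div,
        div_eq_mul_inv, ← Real.rpow_neg (by positivity : (0:ℝ) ≤ m ^ (2:ℝ)),
        ← Real.rpow_mul hm.le, show (2:ℝ) * -α = -(2*α) by ring]
      exact mul_comm _ _
    have h2 : C2 * t ^ (-((N - 2*s)/2)) * m = C2 * m ^ (2*s/N) * d ^ α := by
      rw [htm]
      rw [show C2 * (m ^ (-(2*α)) * d ^ α) * m = C2 * (m ^ (-(2*α)) * m ^ (1:ℝ)) * d ^ α by
        rw [Real.rpow_one]; ring, ← Real.rpow_add hm,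
        show -(2*α) + (1:ℝ) = 2*s/N by rw [hα]; field_simp; ring]
    rw [h1, h2] at hkey
    refine hkey.trans (le_of_eq ?_)
    ring

-- gag only depends on the a.e. class
lemma gag_congr_ae {N : ℕ} {s : ℝ} {u w : EuclideanSpace ℝ (Fin N) → ℝ}
    (h : u =ᵐ[volume] w) : gag N s u = gag N s w := by
  unfold gag
  refine lintegral_congr_ae ?_
  filter_upwards [h] with x hx
  refine lintegral_congr_ae ?_
  filter_upwards [h] with y hy
  rw [hx, hy]

-- pointwise bound |g'(t) t| ≤ c₁ |t|^r for p ≤ r ≤ q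
lemma ptwise_bound {p q r c₁ : ℝ} {g' : ℝ → ℝ} (hp2 : 2 < p) (hpr : p ≤ r) (hrq : r ≤ q)
    (hc₁ : 0 < c₁)
    (hbig : ∀ t : ℝ, 1 ≤ |t| → |g' t| ≤ c₁ * |t| ^ (p - 1))
    (hsmall : ∀ t : ℝ, |t| ≤ 1 → |g' t| ≤ c₁ * |t| ^ (q - 1)) (t : ℝ) :
    |g' t * t| ≤ c₁ * |t| ^ r := by
  rcases eq_or_ne t 0 with rfl | ht0
  · have hq1 : (1:ℝ) < q := by linarith
    have h0 := hsmall 0 (by simp)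
    simp only [abs_zero] at h0 ⊢
    rw [Real.zero_rpow (by linarith : q - 1 ≠ 0)] at h0
    rw [Real.zero_rpow (by linarith : r ≠ 0)]
    have : |g' 0| = 0 := le_antisymm (by simpa using h0) (abs_nonneg _)
    simp [abs_mul, this]
  · have habs : 0 < |t| := abs_pos.mpr ht0
    rcases le_or_gt |t| 1 with hle | hgt
    · have h1 := hsmall t hle
      calc |g' t * t| = |g' t| * |t| := abs_mul _ _
        _ ≤ (c₁ * |t| ^ (q - 1)) * |t| := by
            exact mul_le_mul_of_nonneg_right h1 (abs_nonneg _)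
        _ = c₁ * |t| ^ q := by
            rw [mul_assoc]
            congr 1
            rw [← Real.rpow_add_one (ne_of_gt habs)]
            norm_num
        _ ≤ c₁ * |t| ^ r := by
            refine mul_le_mul_of_nonneg_left ?_ hc₁.le
            exact Real.rpow_le_rpow_of_exponent_ge habs hle hrq
    · have h1 := hbig t hgt.le
      calc |g' t * t| = |g' t| * |t| := abs_mul _ _
        _ ≤ (c₁ * |t| ^ (p - 1)) * |t| := by
            exact mul_le_mul_of_nonneg_right h1 (abs_nonneg _)
        _ = c₁ * |t| ^ p := by
            rw [mul_assoc]
            congr 1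
            rw [← Real.rpow_add_one (ne_of_gt habs)]
            norm_num
        _ ≤ c₁ * |t| ^ r := by
            refine mul_le_mul_of_nonneg_left ?_ hc₁.le
            exact Real.rpow_le_rpow_of_exponent_le hgt.le hpr

set_option maxHeartbeats 2000000 in
lemma sobolev (N : ℕ) (s : ℝ) (hs0 : 0 < s) (hNs : 2 * s < (N : ℝ)) :
    ∃ K : ℝ, 0 < K ∧ ∀ v : EuclideanSpace ℝ (Fin N) → ℝ, Measurable v →
      MemLp v (ENNReal.ofReal (2 * N / ((N : ℝ) - 2 * s))) volume →
      gag N s v ≠ ⊤ → ¬ (v =ᵐ[volume] (0 : EuclideanSpace ℝ (Fin N) → ℝ)) →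
      (eLpNorm v (ENNReal.ofReal (2 * N / ((N : ℝ) - 2 * s))) volume).toReal ^ (2:ℝ)
        ≤ K * (gag N s v).toReal := by
  classical
  set E := EuclideanSpace ℝ (Fin N)
  have hN : (0:ℝ) < N := lt_trans (by linarith) hNs
  have hNd : (0:ℝ) < (N:ℝ) - 2*s := by linarith
  set r : ℝ := 2 * N / ((N : ℝ) - 2 * s) with hr
  have hr2 : (2:ℝ) < r := by
    rw [hr, lt_div_iff₀ hNd]; nlinarith
  have hr1 : (1:ℝ) < r := by linarith
  have hr0 : (0:ℝ) < r := by linarith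
  set κ : ℝ := (N : ℝ) + 2 * s with hκ
  have hκ0 : (0:ℝ) < κ := by rw [hκ]; linarith
  -- ball volume constant
  set c : ℝ := (volume (Metric.ball (0:E) 1)).toReal with hc
  have hcball : volume (Metric.ball (0:E) 1) ≠ ⊤ := (measure_ball_lt_top).ne
  have hc0 : 0 < c := ENNReal.toReal_pos (Metric.measure_ball_pos volume 0 one_pos).ne' hcball
  set C1 : ℝ := c ^ (-(1/2 : ℝ)) with hC1
  set C2 : ℝ := c ^ (-(1/r : ℝ)) with hC2
  have hC1p : 0 < C1 := Real.rpow_pos_of_pos hc0 _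
  have hC2p : 0 < C2 := Real.rpow_pos_of_pos hc0 _
  refine ⟨(C1 + C2) ^ r, by positivity, ?_⟩
  intro v hv hmem hfin hne
  set D : E → ℝ≥0∞ := fun x => ∫⁻ y, ENNReal.ofReal (|v x - v y| ^ 2 / ‖x - y‖ ^ κ) with hD
  have hDmeas : Measurable D := by
    apply Measurable.lintegral_prod_right
    exact ENNReal.measurable_ofReal.comp
      ((((hv.comp measurable_fst).sub (hv.comp measurable_snd)).abs.pow_const 2).div
        ((Real.continuous_rpow_const hκ0.le).comp
          ((continuous_fst.sub continuous_snd).norm)).measurable)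
  have hgagD : gag N s v = ∫⁻ x, D x := rfl
  have hprne : ENNReal.ofReal r ≠ 0 := by
    simp only [Ne, ENNReal.ofReal_eq_zero, not_le]; exact hr0
  have hprtop : ENNReal.ofReal r ≠ ⊤ := ENNReal.ofReal_ne_top
  set M : ℝ≥0∞ := eLpNorm v (ENNReal.ofReal r) volume with hM
  have hMne : M ≠ ⊤ := hmem.eLpNorm_ne_top
  have hM0 : M ≠ 0 := by
    rw [hM, Ne, eLpNorm_eq_zero_iff hmem.aestronglyMeasurable hprne]
    exact hne
  set m : ℝ := M.toReal with hm
  have hm0 : 0 < m := ENNReal.toReal_pos hM0 hMne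
  -- eLpNorm as lintegral
  have hMeq : M = (∫⁻ x, (ENNReal.ofReal |v x|) ^ r) ^ (1/r) := by
    rw [hM, eLpNorm_eq_lintegral_rpow_enorm_toReal hprne hprtop]
    simp_rw [Real.enorm_eq_ofReal_abs, ENNReal.toReal_ofReal hr0.le]
  have hMpow : ∫⁻ x, (ENNReal.ofReal |v x|) ^ r = M ^ r := by
    rw [hMeq, ← ENNReal.rpow_mul, one_div, inv_mul_cancel₀ (ne_of_gt hr0), ENNReal.rpow_one]
  have hDae : ∀ᵐ x ∂(volume : Measure E), D x < ⊤ :=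
    ae_lt_top hDmeas (by rw [← hgagD]; exact hfin)
  have hNr : (N:ℝ)/r = ((N:ℝ) - 2*s)/2 := by
    rw [hr]; field_simp
  -- the pointwise Sobolev estimate
  have hptwise : ∀ᵐ x ∂(volume : Measure E),
      |v x| ≤ (C1 + C2) * m ^ (2*s/(N:ℝ)) * ((D x).toReal) ^ (((N:ℝ) - 2*s)/(2*(N:ℝ))) := by
    filter_upwards [hDae] with x hDx
    apply real_opt hs0 hNs ENNReal.toReal_nonneg hm0 hC1p hC2p
    intro t htpos
    set B := Metric.ball x t with hB
    have hvolB : volume B = ENNReal.ofReal (t ^ (N:ℕ)) * volume (Metric.ball (0:E) 1) := by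
      rw [hB, MeasureTheory.Measure.addHaar_ball_of_pos volume x htpos,
        finrank_euclideanSpace_fin]
    have hvolB_ne : volume B ≠ ⊤ := (measure_ball_lt_top).ne
    have hvolB_toReal : (volume B).toReal = t ^ ((N:ℕ):ℝ) * c := by
      rw [hvolB, ENNReal.toReal_mul, ENNReal.toReal_ofReal (by positivity), ← hc,
        Real.rpow_natCast]
    have hbbpos : (0:ℝ) < t ^ ((N:ℕ):ℝ) * c := by
      have := Real.rpow_pos_of_pos htpos ((N:ℕ):ℝ); positivity
    -- triangle inequality step
    have step1 : ENNReal.ofReal |v x| * volume B ≤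
        (∫⁻ y in B, ENNReal.ofReal |v x - v y|) + ∫⁻ y in B, ENNReal.ofReal |v y| := by
      calc ENNReal.ofReal |v x| * volume B = ∫⁻ _ in B, ENNReal.ofReal |v x| :=
            (setLIntegral_const B _).symm
        _ ≤ ∫⁻ y in B, (ENNReal.ofReal |v x - v y| + ENNReal.ofReal |v y|) := by
            refine lintegral_mono fun y => ?_
            rw [← ENNReal.ofReal_add (abs_nonneg _) (abs_nonneg _)]
            refine ENNReal.ofReal_le_ofReal ?_
            calc |v x| = |(v x - v y) + v y| := by ring_nf
              _ ≤ |v x - v y| + |v y| := abs_add_le _ _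
        _ = _ := lintegral_add_left ((measurable_const.sub hv).abs.ennreal_ofReal) _
    -- Hoelder (2,2) on the first term
    have conj22 : (2:ℝ).HolderConjugate 2 := Real.HolderConjugate.two_two
    have step2 : (∫⁻ y in B, ENNReal.ofReal |v x - v y|) ≤
        (∫⁻ y in B, (ENNReal.ofReal |v x - v y|) ^ (2:ℝ)) ^ ((1:ℝ)/2) *
          (volume B) ^ ((1:ℝ)/2) := by
      have := ENNReal.lintegral_mul_le_Lp_mul_Lq (volume.restrict B) conj22
        (f := fun y => ENNReal.ofReal |v x - v y|) (g := fun _ => 1)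
        ((measurable_const.sub hv).abs.ennreal_ofReal).aemeasurable
        aemeasurable_const
      simpa [Measure.restrict_apply_univ] using this
    -- kernel bound on the inner square integral
    have step3 : (∫⁻ y in B, (ENNReal.ofReal |v x - v y|) ^ (2:ℝ)) ≤
        ENNReal.ofReal (t ^ κ) * D x := by
      have hmono : ∀ y ∈ B, (ENNReal.ofReal |v x - v y|) ^ (2:ℝ) ≤
          ENNReal.ofReal (t ^ κ) * ENNReal.ofReal (|v x - v y| ^ 2 / ‖x - y‖ ^ κ) := by
        intro y hy
        rw [show (2:ℝ) = ((2:ℕ):ℝ) by norm_num, ENNReal.rpow_natCast,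
          ← ENNReal.ofReal_pow (abs_nonneg _), ← ENNReal.ofReal_mul (by positivity)]
        refine ENNReal.ofReal_le_ofReal ?_
        by_cases hxy : y = x
        · subst hxy
          simp
        · have hw0 : (0:ℝ) < ‖x - y‖ := by
            rw [norm_pos_iff, sub_ne_zero]
            exact fun h => hxy h.symm
          have hwt : ‖x - y‖ ≤ t := by
            have := Metric.mem_ball.mp hy
            rw [dist_eq_norm] at this
            have : ‖x - y‖ < t := by rwa [norm_sub_rev]
            linarith
          have hwκ : ‖x - y‖ ^ κ ≤ t ^ κ := Real.rpow_le_rpow (norm_nonneg _) hwt hκ0.le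
          have hwκ0 : (0:ℝ) < ‖x - y‖ ^ κ := Real.rpow_pos_of_pos hw0 _
          calc |v x - v y| ^ 2 = |v x - v y| ^ 2 / ‖x - y‖ ^ κ * ‖x - y‖ ^ κ :=
                (div_mul_cancel₀ _ (ne_of_gt hwκ0)).symm
            _ ≤ |v x - v y| ^ 2 / ‖x - y‖ ^ κ * t ^ κ := by
                refine mul_le_mul_of_nonneg_left hwκ (by positivity)
            _ = t ^ κ * (|v x - v y| ^ 2 / ‖x - y‖ ^ κ) := mul_comm _ _
      calc (∫⁻ y in B, (ENNReal.ofReal |v x - v y|) ^ (2:ℝ))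
          ≤ ∫⁻ y in B, ENNReal.ofReal (t ^ κ) * ENNReal.ofReal (|v x - v y| ^ 2 / ‖x - y‖ ^ κ) :=
            setLIntegral_mono' measurableSet_ball hmono
        _ = ENNReal.ofReal (t ^ κ) * ∫⁻ y in B, ENNReal.ofReal (|v x - v y| ^ 2 / ‖x - y‖ ^ κ) :=
            lintegral_const_mul' _ _ ENNReal.ofReal_ne_top
        _ ≤ ENNReal.ofReal (t ^ κ) * D x := by
            refine mul_le_mul_right ?_ _
            rw [hD]
            exact setLIntegral_le_lintegral B _
    -- Hoelder (r, r') on the second term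
    have conjr : r.HolderConjugate (Real.conjExponent r) := Real.HolderConjugate.conjExponent hr1
    have step4 : (∫⁻ y in B, ENNReal.ofReal |v y|) ≤
        M * (volume B) ^ ((1:ℝ)/Real.conjExponent r) := by
      have hh := ENNReal.lintegral_mul_le_Lp_mul_Lq (volume.restrict B) conjr
        (f := fun y => ENNReal.ofReal |v y|) (g := fun _ => 1)
        (hv.abs.ennreal_ofReal).aemeasurable aemeasurable_const
      have hle : (∫⁻ y in B, (ENNReal.ofReal |v y|) ^ r) ^ ((1:ℝ)/r) ≤ M := by
        have hsub : (∫⁻ y in B, (ENNReal.ofReal |v y|) ^ r) ≤ ∫⁻ y, (ENNReal.ofReal |v y|) ^ r :=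
          setLIntegral_le_lintegral B _
        calc (∫⁻ y in B, (ENNReal.ofReal |v y|) ^ r) ^ ((1:ℝ)/r)
            ≤ (∫⁻ y, (ENNReal.ofReal |v y|) ^ r) ^ ((1:ℝ)/r) :=
              ENNReal.rpow_le_rpow hsub (by positivity)
          _ = M := by rw [hMpow, ← ENNReal.rpow_mul, mul_one_div, div_self (ne_of_gt hr0),
                ENNReal.rpow_one]
      calc (∫⁻ y in B, ENNReal.ofReal |v y|)
          ≤ (∫⁻ y in B, (ENNReal.ofReal |v y|) ^ r) ^ ((1:ℝ)/r) *
            (volume B) ^ ((1:ℝ)/Real.conjExponent r) := by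
            simpa [Measure.restrict_apply_univ] using hh
        _ ≤ M * (volume B) ^ ((1:ℝ)/Real.conjExponent r) := by
            exact mul_le_mul_left hle _
    -- assemble, pass to reals
    have hA : ENNReal.ofReal |v x| * volume B ≤
        (ENNReal.ofReal (t ^ κ) * D x) ^ ((1:ℝ)/2) * (volume B) ^ ((1:ℝ)/2) +
          M * (volume B) ^ ((1:ℝ)/Real.conjExponent r) := by
      refine step1.trans (add_le_add (step2.trans ?_) step4)
      exact mul_le_mul_left (ENNReal.rpow_le_rpow step3 (by norm_num)) _
    -- pass to real numbers
    set d : ℝ := (D x).toReal with hd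
    have hd0 : 0 ≤ d := ENNReal.toReal_nonneg
    have hterm1_ne : (ENNReal.ofReal (t ^ κ) * D x) ^ ((1:ℝ)/2) * (volume B) ^ ((1:ℝ)/2) ≠ ⊤ :=
      ENNReal.mul_ne_top
        (ENNReal.rpow_ne_top_of_nonneg (by norm_num)
          (ENNReal.mul_ne_top ENNReal.ofReal_ne_top hDx.ne))
        (ENNReal.rpow_ne_top_of_nonneg (by norm_num) hvolB_ne)
    have hconjpos : 0 < Real.conjExponent r := conjr.symm.pos
    have hterm2_ne : M * (volume B) ^ ((1:ℝ)/Real.conjExponent r) ≠ ⊤ :=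
      ENNReal.mul_ne_top hMne (ENNReal.rpow_ne_top_of_nonneg (by positivity) hvolB_ne)
    have hreal := ENNReal.toReal_mono (by
      rw [Ne, ENNReal.add_eq_top, not_or]; exact ⟨hterm1_ne, hterm2_ne⟩) hA
    rw [ENNReal.toReal_add hterm1_ne hterm2_ne, ENNReal.toReal_mul, ENNReal.toReal_mul,
      ENNReal.toReal_mul, ENNReal.toReal_ofReal (abs_nonneg _), hvolB_toReal,
      ← ENNReal.toReal_rpow, ← ENNReal.toReal_rpow, ← ENNReal.toReal_rpow,
      ENNReal.toReal_mul, ENNReal.toReal_ofReal (by positivity), hvolB_toReal, ← hd, ← hm]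
        at hreal
    set P : ℝ := t ^ ((N:ℕ):ℝ) * c with hP
    have hPpos : 0 < P := hbbpos
    -- two exponent identities
    have e1 : C1 * c = c ^ ((1:ℝ)/2) := by
      have : C1 * c = c ^ (-(1/2:ℝ)) * c ^ (1:ℝ) := by rw [Real.rpow_one, hC1]
      rw [this, ← Real.rpow_add hc0]; norm_num
    have e2 : t ^ s * t ^ ((N:ℕ):ℝ) = t ^ (κ * (1/2:ℝ)) * t ^ (((N:ℕ):ℝ) * (1/2:ℝ)) := by
      rw [← Real.rpow_add htpos, ← Real.rpow_add htpos]
      congr 1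
      rw [hκ]; push_cast; ring
    have hconj' : (1:ℝ)/Real.conjExponent r = (r-1)/r := by
      rw [Real.conjExponent, one_div_div]
    have e3 : C2 * c = c ^ ((r-1)/r) := by
      have : C2 * c = c ^ (-(1/r:ℝ)) * c ^ (1:ℝ) := by rw [Real.rpow_one, hC2]
      rw [this, ← Real.rpow_add hc0]
      congr 1
      field_simp
      ring
    have e4 : t ^ (-(((N:ℝ) - 2*s)/2)) * t ^ ((N:ℕ):ℝ) = t ^ (((N:ℕ):ℝ) * ((r-1)/r)) := by
      rw [← Real.rpow_add htpos]
      congr 1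
      have : (N:ℝ) * ((r-1)/r) = (N:ℝ) - (N:ℝ)/r := by field_simp
      rw [this, hNr]
      push_cast; ring
    have E1 : (t ^ κ * d) ^ ((1:ℝ)/2) * P ^ ((1:ℝ)/2) = (C1 * t ^ s * d ^ ((1:ℝ)/2)) * P := by
      rw [hP, Real.mul_rpow (by positivity) hd0, Real.mul_rpow (by positivity) hc0.le,
        ← Real.rpow_mul htpos.le, ← Real.rpow_mul htpos.le]
      calc t ^ (κ * (1/2:ℝ)) * d ^ ((1:ℝ)/2) * (t ^ (((N:ℕ):ℝ) * (1/2:ℝ)) * c ^ ((1:ℝ)/2))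
          = (t ^ (κ * (1/2:ℝ)) * t ^ (((N:ℕ):ℝ) * (1/2:ℝ))) * c ^ ((1:ℝ)/2) * d ^ ((1:ℝ)/2) := by
            ring
        _ = (t ^ s * t ^ ((N:ℕ):ℝ)) * (C1 * c) * d ^ ((1:ℝ)/2) := by rw [e1, e2]
        _ = (C1 * t ^ s * d ^ ((1:ℝ)/2)) * (t ^ ((N:ℕ):ℝ) * c) := by ring
    have E2 : m * P ^ ((1:ℝ)/Real.conjExponent r) = (C2 * t ^ (-(((N:ℝ) - 2*s)/2)) * m) * P := by
      rw [hconj', hP, Real.mul_rpow (by positivity) hc0.le, ← Real.rpow_mul htpos.le]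
      calc m * (t ^ (((N:ℕ):ℝ) * ((r-1)/r)) * c ^ ((r-1)/r))
          = m * ((t ^ (-(((N:ℝ) - 2*s)/2)) * t ^ ((N:ℕ):ℝ)) * (C2 * c)) := by rw [e3, e4]
        _ = (C2 * t ^ (-(((N:ℝ) - 2*s)/2)) * m) * (t ^ ((N:ℕ):ℝ) * c) := by ring
    rw [E1, E2] at hreal
    have : |v x| * P ≤ (C1 * t ^ s * d ^ ((1:ℝ)/2) + C2 * t ^ (-(((N:ℝ) - 2*s)/2)) * m) * P := by
      rw [add_mul]; exact hreal
    exact le_of_mul_le_mul_right (by linarith [this]) hPpos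
  -- integrate the pointwise estimate
  set α : ℝ := ((N:ℝ) - 2*s)/(2*(N:ℝ)) with hαdef
  have hα : α * r = 1 := by rw [hαdef, hr]; field_simp
  set Q : ℝ := (C1 + C2) * m ^ (2*s/(N:ℝ)) with hQ
  have hQ0 : 0 ≤ Q := by positivity
  have hbound : ∀ᵐ x ∂(volume : Measure E),
      (ENNReal.ofReal |v x|) ^ r ≤ ENNReal.ofReal (Q ^ r) * D x := by
    filter_upwards [hptwise, hDae] with x hx hDx
    calc (ENNReal.ofReal |v x|) ^ r
        ≤ (ENNReal.ofReal (Q * ((D x).toReal) ^ α)) ^ r :=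
          ENNReal.rpow_le_rpow (ENNReal.ofReal_le_ofReal hx) hr0.le
      _ = ENNReal.ofReal ((Q * ((D x).toReal) ^ α) ^ r) :=
          ENNReal.ofReal_rpow_of_nonneg (by positivity) hr0.le
      _ = ENNReal.ofReal (Q ^ r * (D x).toReal) := by
          rw [Real.mul_rpow hQ0 (by positivity), ← Real.rpow_mul ENNReal.toReal_nonneg, hα,
            Real.rpow_one]
      _ = ENNReal.ofReal (Q ^ r) * ENNReal.ofReal ((D x).toReal) :=
          ENNReal.ofReal_mul (by positivity)
      _ ≤ ENNReal.ofReal (Q ^ r) * D x := by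
          rw [ENNReal.ofReal_toReal hDx.ne]
  have hint : M ^ r ≤ ENNReal.ofReal (Q ^ r) * gag N s v := by
    rw [← hMpow, hgagD]
    calc ∫⁻ x, (ENNReal.ofReal |v x|) ^ r
        ≤ ∫⁻ x, ENNReal.ofReal (Q ^ r) * D x := lintegral_mono_ae hbound
      _ = ENNReal.ofReal (Q ^ r) * ∫⁻ x, D x := lintegral_const_mul' _ _ ENNReal.ofReal_ne_top
  have hTreal : m ^ r ≤ Q ^ r * (gag N s v).toReal := by
    have h := ENNReal.toReal_mono (ENNReal.mul_ne_top ENNReal.ofReal_ne_top hfin) hint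
    rwa [ENNReal.toReal_mul, ENNReal.toReal_ofReal (by positivity), ← ENNReal.toReal_rpow,
      ← hm] at h
  have hr2s : (2*s/(N:ℝ)) * r = r - 2 := by rw [hr]; field_simp; ring
  have hQr : Q ^ r = (C1 + C2) ^ r * m ^ (r - 2) := by
    rw [hQ, Real.mul_rpow (by positivity) (by positivity), ← Real.rpow_mul hm0.le, hr2s]
  have hmsplit : m ^ r = m ^ (2:ℝ) * m ^ (r - 2) := by
    rw [← Real.rpow_add hm0]; congr 1; ring
  have hk : 0 < m ^ (r - 2) := Real.rpow_pos_of_pos hm0 _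
  refine le_of_mul_le_mul_right ?_ hk
  calc m ^ (2:ℝ) * m ^ (r - 2) = m ^ r := hmsplit.symm
    _ ≤ Q ^ r * (gag N s v).toReal := hTreal
    _ = (C1 + C2) ^ r * (gag N s v).toReal * m ^ (r - 2) := by rw [hQr]; ring

/-- Step 4: the Gagliardo seminorm is bounded away from zero on the Nehari manifold. -/
theorem nehari_seminorm_bounded_below (N : ℕ) (s p q c₁ : ℝ) (g g' : ℝ → ℝ)
    (hs0 : 0 < s) (hs1 : s < 1) (hNs : 2 * s < (N : ℝ))
    (hp : 2 < p) (hpc : p < 2 * N / ((N : ℝ) - 2 * s))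
    (hcq : 2 * N / ((N : ℝ) - 2 * s) < q) (hc₁ : 0 < c₁)
    (hder : ∀ t, HasDerivAt g (g' t) t)
    (hbig : ∀ t : ℝ, 1 ≤ |t| → |g' t| ≤ c₁ * |t| ^ (p - 1))
    (hsmall : ∀ t : ℝ, |t| ≤ 1 → |g' t| ≤ c₁ * |t| ^ (q - 1)) :
    ∃ δ > 0, ∀ v : EuclideanSpace ℝ (Fin N) → ℝ,
      MemLp v (ENNReal.ofReal (2 * N / ((N : ℝ) - 2 * s))) volume →
      gag N s v ≠ ⊤ →
      ¬ (v =ᵐ[volume] (0 : EuclideanSpace ℝ (Fin N) → ℝ)) →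
      Integrable (fun x => g' (v x) * v x) volume →
      (gag N s v).toReal = ∫ x, g' (v x) * v x →
      δ ≤ (gag N s v).toReal := by
  obtain ⟨K, hK0, hsob⟩ := sobolev N s hs0 hNs
  have hN : (0:ℝ) < N := lt_trans (by linarith) hNs
  have hNd : (0:ℝ) < (N:ℝ) - 2*s := by linarith
  set r : ℝ := 2 * N / ((N:ℝ) - 2 * s) with hrdef
  have hr2 : (2:ℝ) < r := lt_trans hp hpc
  have hr0 : (0:ℝ) < r := by linarith
  have hprne : ENNReal.ofReal r ≠ 0 := by
    simp only [Ne, ENNReal.ofReal_eq_zero, not_le]; exact hr0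
  have hprtop : ENNReal.ofReal r ≠ ⊤ := ENNReal.ofReal_ne_top
  set A : ℝ := c₁ * K ^ (r/2) with hA
  have hA0 : 0 < A := by positivity
  refine ⟨(A⁻¹) ^ ((2:ℝ)/(r-2)), by positivity, ?_⟩
  intro v hmem hfin hne hint hnehari
  set w := hmem.aestronglyMeasurable.mk v with hw
  have hvw : v =ᵐ[volume] w := hmem.aestronglyMeasurable.ae_eq_mk
  have hwmeas : Measurable w :=
    hmem.aestronglyMeasurable.stronglyMeasurable_mk.measurable
  have hgag : gag N s v = gag N s w := gag_congr_ae hvw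
  have help : eLpNorm v (ENNReal.ofReal r) volume = eLpNorm w (ENNReal.ofReal r) volume :=
    eLpNorm_congr_ae hvw
  have hmem_w : MemLp w (ENNReal.ofReal r) volume := hmem.ae_eq hvw
  have hne_w : ¬ (w =ᵐ[volume] (0 : EuclideanSpace ℝ (Fin N) → ℝ)) :=
    fun h => hne (hvw.trans h)
  have hfin_w : gag N s w ≠ ⊤ := hgag ▸ hfin
  have hsobv := hsob w hwmeas hmem_w hfin_w hne_w
  rw [← help, ← hgag] at hsobv
  set m : ℝ := (eLpNorm v (ENNReal.ofReal r) volume).toReal with hm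
  set T : ℝ := (gag N s v).toReal with hT
  have hm0 : 0 < m := by
    refine ENNReal.toReal_pos ?_ hmem.eLpNorm_ne_top
    rw [Ne, eLpNorm_eq_zero_iff hmem.aestronglyMeasurable hprne]
    exact hne
  -- T ≤ c₁ * m ^ r
  have hIr : Integrable (fun x => |v x| ^ r) volume := by
    have := hmem.integrable_norm_rpow hprne hprtop
    simpa [Real.norm_eq_abs, ENNReal.toReal_ofReal hr0.le] using this
  have hvr_eq : ∫ x, |v x| ^ r = m ^ r := by
    have hnn : (fun (_ : EuclideanSpace ℝ (Fin N)) => (0:ℝ)) ≤ᵐ[volume] fun x => |v x| ^ r :=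
      Filter.Eventually.of_forall fun x => by positivity
    have hsm : AEStronglyMeasurable (fun x => |v x| ^ r) volume := by
      have := (Real.continuous_rpow_const hr0.le).comp_aestronglyMeasurable hmem.aestronglyMeasurable.norm
      simpa [Real.norm_eq_abs] using this
    rw [integral_eq_lintegral_of_nonneg_ae hnn hsm]
    have heq : ∫⁻ x, ENNReal.ofReal (|v x| ^ r) = ∫⁻ x, (ENNReal.ofReal |v x|) ^ r :=
      lintegral_congr fun x => (ENNReal.ofReal_rpow_of_nonneg (abs_nonneg _) hr0.le).symm
    rw [heq]
    have hMpow : ∫⁻ x, (ENNReal.ofReal |v x|) ^ r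
        = (eLpNorm v (ENNReal.ofReal r) volume) ^ r := by
      rw [eLpNorm_eq_lintegral_rpow_enorm_toReal hprne hprtop]
      simp_rw [Real.enorm_eq_ofReal_abs, ENNReal.toReal_ofReal hr0.le]
      rw [← ENNReal.rpow_mul, one_div, inv_mul_cancel₀ (ne_of_gt hr0), ENNReal.rpow_one]
    rw [hMpow, ← ENNReal.toReal_rpow, ← hm]
  have hTle : T ≤ c₁ * m ^ r := by
    rw [hnehari]
    calc ∫ x, g' (v x) * v x ≤ ∫ x, |g' (v x) * v x| :=
          integral_mono hint hint.abs fun x => le_abs_self _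
      _ ≤ ∫ x, c₁ * |v x| ^ r :=
          integral_mono hint.abs (hIr.const_mul c₁)
            fun x => ptwise_bound hp hpc.le hcq.le hc₁ hbig hsmall (v x)
      _ = c₁ * ∫ x, |v x| ^ r := integral_const_mul c₁ _
      _ = c₁ * m ^ r := by rw [hvr_eq]
  have hT0 : 0 < T := by
    have h2 : (0:ℝ) < m ^ (2:ℝ) := Real.rpow_pos_of_pos hm0 _
    nlinarith [hsobv]
  -- T ≤ A * T ^ (r/2)
  have hstep : T ≤ A * T ^ (r/2) := by
    have h3 : m ^ r ≤ (K * T) ^ (r/2) := by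
      have : m ^ r = (m ^ (2:ℝ)) ^ (r/2) := by
        rw [← Real.rpow_mul hm0.le]
        congr 1; ring
      rw [this]
      exact Real.rpow_le_rpow (by positivity) hsobv (by positivity)
    calc T ≤ c₁ * m ^ r := hTle
      _ ≤ c₁ * (K * T) ^ (r/2) := mul_le_mul_of_nonneg_left h3 hc₁.le
      _ = A * T ^ (r/2) := by
          rw [Real.mul_rpow hK0.le hT0.le, hA]
          ring
  have hrm2 : (0:ℝ) < r - 2 := by linarith
  have hTsplit : T ^ (r/2) = T ^ (1:ℝ) * T ^ (r/2 - 1) := by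
    rw [← Real.rpow_add hT0]; congr 1; ring
  have h1le : 1 * T ≤ (A * T ^ (r/2 - 1)) * T := by
    rw [one_mul]
    calc T ≤ A * T ^ (r/2) := hstep
      _ = (A * T ^ (r/2 - 1)) * T := by rw [hTsplit, Real.rpow_one]; ring
  have h2 : (1:ℝ) ≤ A * T ^ (r/2 - 1) := le_of_mul_le_mul_right h1le hT0
  have h3 : A⁻¹ ≤ T ^ (r/2 - 1) := by
    rw [inv_eq_one_div, div_le_iff₀ hA0]
    linarith [h2, mul_comm A (T ^ (r/2 - 1))]
  have h4 := Real.rpow_le_rpow (inv_nonneg.mpr hA0.le) h3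
    (le_of_lt (div_pos two_pos hrm2))
  have h5 : (T ^ (r/2 - 1)) ^ ((2:ℝ)/(r-2)) = T := by
    rw [← Real.rpow_mul hT0.le,
      show (r/2 - 1) * ((2:ℝ)/(r-2)) = 1 by
        have h := ne_of_gt hrm2
        field_simp,
      Real.rpow_one]
  exact h5 ▸ h4
end

section
/- Let g ∈ C¹(ℝ) satisfy |g'(t)| ≤ c₁|t|^{p−1} for |t| ≥ 1 and |g'(t)| ≤ c₁|t|^{q−1} for |t| ≤ 1 with 2 < p < q. Then the map u ↦ g'(u) sends L^p + L^q boundedly into L^{p/(p−1)} ∩ L^{q/(q−1)}: if ‖u‖_{L^p+L^q} ≤ M then ‖g'(u)‖_{L^{p'}} + ‖g'(u)‖_{L^{q'}} ≤ C(M), where p' = p/(p−1), q' = q/(q−1). -/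
open MeasureTheory Filter

/-- Splitting the "minimum" function along a sum. -/
lemma min_rpow_add_le {p q : ℝ} (hp : 0 < p) (hpq : p ≤ q) (a b : ℝ) :
    min (|a + b| ^ p) (|a + b| ^ q) ≤ 2 ^ q * (|a| ^ p + |b| ^ q) := by
  have hq : 0 < q := hp.trans_le hpq
  have h2 : (2:ℝ) ^ p ≤ 2 ^ q := Real.rpow_le_rpow_of_exponent_le one_le_two hpq
  rcases le_total |b| |a| with h | h
  · have h1 : |a + b| ≤ 2 * |a| := by
      calc |a + b| ≤ |a| + |b| := abs_add_le _ _
        _ ≤ 2 * |a| := by linarith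
    calc min (|a + b| ^ p) (|a + b| ^ q) ≤ |a + b| ^ p := min_le_left _ _
      _ ≤ (2 * |a|) ^ p := Real.rpow_le_rpow (abs_nonneg _) h1 hp.le
      _ = 2 ^ p * |a| ^ p := Real.mul_rpow (by norm_num) (abs_nonneg _)
      _ ≤ 2 ^ q * |a| ^ p :=
        mul_le_mul_of_nonneg_right h2 (Real.rpow_nonneg (abs_nonneg _) _)
      _ ≤ 2 ^ q * (|a| ^ p + |b| ^ q) := by
        have : (0:ℝ) ≤ |b| ^ q := Real.rpow_nonneg (abs_nonneg _) _
        have h2q : (0:ℝ) ≤ 2 ^ q := Real.rpow_nonneg (by norm_num) _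
        nlinarith
  · have h1 : |a + b| ≤ 2 * |b| := by
      calc |a + b| ≤ |a| + |b| := abs_add_le _ _
        _ ≤ 2 * |b| := by linarith
    calc min (|a + b| ^ p) (|a + b| ^ q) ≤ |a + b| ^ q := min_le_right _ _
      _ ≤ (2 * |b|) ^ q := Real.rpow_le_rpow (abs_nonneg _) h1 hq.le
      _ = 2 ^ q * |b| ^ q := Real.mul_rpow (by norm_num) (abs_nonneg _)
      _ ≤ 2 ^ q * (|a| ^ p + |b| ^ q) := by
        have : (0:ℝ) ≤ |a| ^ p := Real.rpow_nonneg (abs_nonneg _) _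
        have h2q : (0:ℝ) ≤ 2 ^ q := Real.rpow_nonneg (by norm_num) _
        nlinarith

/-- Pointwise bound for `|g'|^r` by the minimum function. -/
lemma abs_g'_rpow_le {p q c₁ : ℝ} {g' : ℝ → ℝ} (hp : 1 < p) (hpq : p ≤ q) (hc₁ : 0 < c₁)
    (hbig : ∀ t : ℝ, 1 ≤ |t| → |g' t| ≤ c₁ * |t| ^ (p - 1))
    (hsmall : ∀ t : ℝ, |t| ≤ 1 → |g' t| ≤ c₁ * |t| ^ (q - 1))
    {r : ℝ} (hr : 0 < r) (h1 : (p - 1) * r ≤ p) (h2 : q ≤ (q - 1) * r) (t : ℝ) :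
    |g' t| ^ r ≤ c₁ ^ r * min (|t| ^ p) (|t| ^ q) := by
  have hq : 1 < q := hp.trans_le hpq
  rcases le_total 1 |t| with ht | ht
  · have hmin : min (|t| ^ p) (|t| ^ q) = |t| ^ p :=
      min_eq_left (Real.rpow_le_rpow_of_exponent_le ht hpq)
    rw [hmin]
    calc |g' t| ^ r ≤ (c₁ * |t| ^ (p - 1)) ^ r :=
          Real.rpow_le_rpow (abs_nonneg _) (hbig t ht) hr.le
      _ = c₁ ^ r * (|t| ^ (p - 1)) ^ r :=
          Real.mul_rpow hc₁.le (Real.rpow_nonneg (abs_nonneg _) _)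
      _ = c₁ ^ r * |t| ^ ((p - 1) * r) := by
          rw [← Real.rpow_mul (abs_nonneg _)]
      _ ≤ c₁ ^ r * |t| ^ p := by
          have := Real.rpow_le_rpow_of_exponent_le ht h1
          exact mul_le_mul_of_nonneg_left this (Real.rpow_pos_of_pos hc₁ r).le
  · rcases eq_or_lt_of_le (abs_nonneg t) with h0 | h0
    · have ht0 : t = 0 := by
        have := h0.symm
        simpa [abs_eq_zero] using this
      have hg0 : |g' t| ≤ 0 := by
        have := hsmall t ht
        rw [ht0] at this ⊢
        simpa [Real.zero_rpow (by linarith : q - 1 ≠ 0)] using this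
      have hg0' : g' t = 0 := by
        have := abs_nonneg (g' t)
        have : |g' t| = 0 := le_antisymm hg0 this
        exact abs_eq_zero.1 this
      rw [hg0', abs_zero, Real.zero_rpow hr.ne']
      positivity
    · have hmin : min (|t| ^ p) (|t| ^ q) = |t| ^ q :=
        min_eq_right (Real.rpow_le_rpow_of_exponent_ge h0 ht hpq)
      rw [hmin]
      calc |g' t| ^ r ≤ (c₁ * |t| ^ (q - 1)) ^ r :=
            Real.rpow_le_rpow (abs_nonneg _) (hsmall t ht) hr.le
        _ = c₁ ^ r * (|t| ^ (q - 1)) ^ r :=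
            Real.mul_rpow hc₁.le (Real.rpow_nonneg (abs_nonneg _) _)
        _ = c₁ ^ r * |t| ^ ((q - 1) * r) := by
            rw [← Real.rpow_mul (abs_nonneg _)]
        _ ≤ c₁ ^ r * |t| ^ q := by
            have := Real.rpow_le_rpow_of_exponent_ge h0 ht h2
            exact mul_le_mul_of_nonneg_left this (Real.rpow_pos_of_pos hc₁ r).le

/-- `g'` maps bounded sets of `L^p + L^q` into bounded sets of `L^{p'} ∩ L^{q'}`. -/
theorem g'_bounded_map (N : ℕ) (p q c₁ : ℝ) (g g' : ℝ → ℝ)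
    (hp : 2 < p) (hpq : p < q) (hc₁ : 0 < c₁)
    (hder : ∀ t, HasDerivAt g (g' t) t)
    (hbig : ∀ t : ℝ, 1 ≤ |t| → |g' t| ≤ c₁ * |t| ^ (p - 1))
    (hsmall : ∀ t : ℝ, |t| ≤ 1 → |g' t| ≤ c₁ * |t| ^ (q - 1)) :
    ∀ M > (0:ℝ), ∃ C > 0, ∀ u : EuclideanSpace ℝ (Fin N) → ℝ,
      (∃ u₁ u₂ : EuclideanSpace ℝ (Fin N) → ℝ, u = u₁ + u₂ ∧
        MemLp u₁ (ENNReal.ofReal p) volume ∧ MemLp u₂ (ENNReal.ofReal q) volume) →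
      sumNorm N p q u ≤ M →
      MemLp (fun x => g' (u x)) (ENNReal.ofReal (p / (p - 1))) volume ∧
      MemLp (fun x => g' (u x)) (ENNReal.ofReal (q / (q - 1))) volume ∧
      (eLpNorm (fun x => g' (u x)) (ENNReal.ofReal (p / (p - 1))) volume).toReal +
        (eLpNorm (fun x => g' (u x)) (ENNReal.ofReal (q / (q - 1))) volume).toReal ≤ C := by
  have hp1 : 1 < p := by linarith
  have hp0 : 0 < p := by linarith
  have hq0 : 0 < q := by linarith
  have hpm : 0 < p - 1 := by linarith
  have hqm : 0 < q - 1 := by linarith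
  set p' := p / (p - 1) with hp'def
  set q' := q / (q - 1) with hq'def
  have hp'pos : 0 < p' := div_pos hp0 hpm
  have hq'pos : 0 < q' := div_pos hq0 hqm
  have hp'1 : (p - 1) * p' ≤ p := by
    rw [hp'def]; field_simp; exact le_rfl
  have hp'2 : q ≤ (q - 1) * p' := by
    rw [hp'def, mul_div_assoc']
    rw [le_div_iff₀ hpm]
    nlinarith
  have hq'1 : (p - 1) * q' ≤ p := by
    rw [hq'def, mul_div_assoc']
    rw [div_le_iff₀ hqm]
    nlinarith
  have hq'2 : q ≤ (q - 1) * q' := by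
    rw [hq'def]; field_simp; exact le_rfl
  -- measurability of g'
  have hg'meas : Measurable g' := by
    have : g' = deriv g := funext fun t => ((hder t).deriv).symm
    rw [this]
    exact measurable_deriv g
  intro M hM
  set K : ℝ := (M + 1) ^ p + (M + 1) ^ q with hKdef
  have hM1 : (0:ℝ) < M + 1 := by linarith
  have hKpos : 0 < K := by
    have := Real.rpow_pos_of_pos hM1 p
    have := Real.rpow_pos_of_pos hM1 q
    positivity
  have hCr : ∀ r : ℝ, 0 < r → 0 < (c₁ ^ r * 2 ^ q * K) ^ (1 / r) := by
    intro r hr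
    have h1 : (0:ℝ) < c₁ ^ r := Real.rpow_pos_of_pos hc₁ r
    have h2 : (0:ℝ) < (2:ℝ) ^ q := Real.rpow_pos_of_pos (by norm_num) q
    exact Real.rpow_pos_of_pos (by positivity) _
  refine ⟨(c₁ ^ p' * 2 ^ q * K) ^ (1 / p') + (c₁ ^ q' * 2 ^ q * K) ^ (1 / q'),
    by have := hCr p' hp'pos; have := hCr q' hq'pos; linarith, ?_⟩
  intro u ⟨v₁, v₂, hv, hv₁, hv₂⟩ hle
  -- extract a good decomposition from the infimum
  have hSne : Set.Nonempty {r : ℝ | ∃ u₁ u₂ : EuclideanSpace ℝ (Fin N) → ℝ, u = u₁ + u₂ ∧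
      MemLp u₁ (ENNReal.ofReal p) volume ∧ MemLp u₂ (ENNReal.ofReal q) volume ∧
      r = (eLpNorm u₁ (ENNReal.ofReal p) volume).toReal +
        (eLpNorm u₂ (ENNReal.ofReal q) volume).toReal} :=
    ⟨_, v₁, v₂, hv, hv₁, hv₂, rfl⟩
  have hSbdd : BddBelow {r : ℝ | ∃ u₁ u₂ : EuclideanSpace ℝ (Fin N) → ℝ, u = u₁ + u₂ ∧
      MemLp u₁ (ENNReal.ofReal p) volume ∧ MemLp u₂ (ENNReal.ofReal q) volume ∧
      r = (eLpNorm u₁ (ENNReal.ofReal p) volume).toReal +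
        (eLpNorm u₂ (ENNReal.ofReal q) volume).toReal} := by
    refine ⟨0, ?_⟩
    rintro r ⟨u₁, u₂, -, -, -, rfl⟩
    positivity
  have hlt : sumNorm N p q u < M + 1 := lt_of_le_of_lt hle (by linarith)
  rw [sumNorm] at hlt
  obtain ⟨r, ⟨u₁, u₂, hu, hu₁, hu₂, hr⟩, hrlt⟩ := (csInf_lt_iff hSbdd hSne).1 hlt
  subst hr
  have hn₁ : (eLpNorm u₁ (ENNReal.ofReal p) volume).toReal ≤ M + 1 := by
    have := ENNReal.toReal_nonneg (a := eLpNorm u₂ (ENNReal.ofReal q) volume)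
    linarith
  have hn₂ : (eLpNorm u₂ (ENNReal.ofReal q) volume).toReal ≤ M + 1 := by
    have := ENNReal.toReal_nonneg (a := eLpNorm u₁ (ENNReal.ofReal p) volume)
    linarith
  have hE₁ : eLpNorm u₁ (ENNReal.ofReal p) volume ≤ ENNReal.ofReal (M + 1) := by
    rw [← ENNReal.ofReal_toReal hu₁.2.ne]
    exact ENNReal.ofReal_le_ofReal hn₁
  have hE₂ : eLpNorm u₂ (ENNReal.ofReal q) volume ≤ ENNReal.ofReal (M + 1) := by
    rw [← ENNReal.ofReal_toReal hu₂.2.ne]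
    exact ENNReal.ofReal_le_ofReal hn₂
  -- lintegral bounds on u₁, u₂
  have lint_eq : ∀ (s : ℝ), 0 < s → ∀ (f : EuclideanSpace ℝ (Fin N) → ℝ),
      (∫⁻ x, (‖f x‖₊ : ENNReal) ^ s) =
        (eLpNorm f (ENNReal.ofReal s) volume) ^ s := by
    intro s hs f
    rw [eLpNorm_eq_lintegral_rpow_enorm_toReal (by simpa using hs) ENNReal.ofReal_ne_top]
    simp only [enorm_eq_nnnorm]
    rw [ENNReal.toReal_ofReal hs.le, ← ENNReal.rpow_mul, one_div,
      inv_mul_cancel₀ hs.ne', ENNReal.rpow_one]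
  have hI₁ : (∫⁻ x, (‖u₁ x‖₊ : ENNReal) ^ p) ≤ ENNReal.ofReal ((M + 1) ^ p) := by
    rw [lint_eq p hp0 u₁, ← ENNReal.ofReal_rpow_of_nonneg hM1.le hp0.le]
    exact ENNReal.rpow_le_rpow hE₁ hp0.le
  have hI₂ : (∫⁻ x, (‖u₂ x‖₊ : ENNReal) ^ q) ≤ ENNReal.ofReal ((M + 1) ^ q) := by
    rw [lint_eq q hq0 u₂, ← ENNReal.ofReal_rpow_of_nonneg hM1.le hq0.le]
    exact ENNReal.rpow_le_rpow hE₂ hq0.le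
  -- measurability of g' ∘ u
  have huae : AEMeasurable u volume := by
    rw [hu]
    exact (hu₁.1.aemeasurable.add hu₂.1.aemeasurable)
  have hgu : AEMeasurable (fun x => g' (u x)) volume := hg'meas.comp_aemeasurable huae
  -- the key estimate, uniform in the exponent r
  have key : ∀ r : ℝ, 0 < r → (p - 1) * r ≤ p → q ≤ (q - 1) * r →
      MemLp (fun x => g' (u x)) (ENNReal.ofReal r) volume ∧
      (eLpNorm (fun x => g' (u x)) (ENNReal.ofReal r) volume).toReal ≤
        (c₁ ^ r * 2 ^ q * K) ^ (1 / r) := by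
    intro r hr h1 h2
    have hpt : ∀ x, (‖g' (u x)‖₊ : ENNReal) ^ r ≤
        ENNReal.ofReal (c₁ ^ r * 2 ^ q) *
          ((‖u₁ x‖₊ : ENNReal) ^ p + (‖u₂ x‖₊ : ENNReal) ^ q) := by
      intro x
      have hux : u x = u₁ x + u₂ x := by rw [hu]; rfl
      have hreal : |g' (u x)| ^ r ≤ c₁ ^ r * 2 ^ q * (|u₁ x| ^ p + |u₂ x| ^ q) := by
        calc |g' (u x)| ^ r ≤ c₁ ^ r * min (|u x| ^ p) (|u x| ^ q) :=
              abs_g'_rpow_le hp1 hpq.le hc₁ hbig hsmall hr h1 h2 (u x)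
          _ ≤ c₁ ^ r * (2 ^ q * (|u₁ x| ^ p + |u₂ x| ^ q)) := by
              refine mul_le_mul_of_nonneg_left ?_ (Real.rpow_pos_of_pos hc₁ r).le
              rw [hux]
              exact min_rpow_add_le hp0 hpq.le (u₁ x) (u₂ x)
          _ = c₁ ^ r * 2 ^ q * (|u₁ x| ^ p + |u₂ x| ^ q) := by ring
      have e1 : (‖g' (u x)‖₊ : ENNReal) ^ r = ENNReal.ofReal (|g' (u x)| ^ r) := by
        rw [← enorm_eq_nnnorm, ← ofReal_norm, Real.norm_eq_abs,
          ENNReal.ofReal_rpow_of_nonneg (abs_nonneg _) hr.le]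
      have e2 : (‖u₁ x‖₊ : ENNReal) ^ p = ENNReal.ofReal (|u₁ x| ^ p) := by
        rw [← enorm_eq_nnnorm, ← ofReal_norm, Real.norm_eq_abs,
          ENNReal.ofReal_rpow_of_nonneg (abs_nonneg _) hp0.le]
      have e3 : (‖u₂ x‖₊ : ENNReal) ^ q = ENNReal.ofReal (|u₂ x| ^ q) := by
        rw [← enorm_eq_nnnorm, ← ofReal_norm, Real.norm_eq_abs,
          ENNReal.ofReal_rpow_of_nonneg (abs_nonneg _) hq0.le]
      rw [e1, e2, e3, ← ENNReal.ofReal_add (Real.rpow_nonneg (abs_nonneg _) _)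
        (Real.rpow_nonneg (abs_nonneg _) _), ← ENNReal.ofReal_mul (by positivity)]
      exact ENNReal.ofReal_le_ofReal hreal
    have hJ : (∫⁻ x, (‖g' (u x)‖₊ : ENNReal) ^ r) ≤
        ENNReal.ofReal (c₁ ^ r * 2 ^ q * K) := by
      calc ∫⁻ x, (‖g' (u x)‖₊ : ENNReal) ^ r
          ≤ ∫⁻ x, ENNReal.ofReal (c₁ ^ r * 2 ^ q) *
              ((‖u₁ x‖₊ : ENNReal) ^ p + (‖u₂ x‖₊ : ENNReal) ^ q) :=
            lintegral_mono hpt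
        _ = ENNReal.ofReal (c₁ ^ r * 2 ^ q) *
              ∫⁻ x, ((‖u₁ x‖₊ : ENNReal) ^ p + (‖u₂ x‖₊ : ENNReal) ^ q) :=
            lintegral_const_mul' _ _ ENNReal.ofReal_ne_top
        _ = ENNReal.ofReal (c₁ ^ r * 2 ^ q) *
              ((∫⁻ x, (‖u₁ x‖₊ : ENNReal) ^ p) + ∫⁻ x, (‖u₂ x‖₊ : ENNReal) ^ q) := by
            exact congrArg _ (lintegral_add_left' (hu₁.1.enorm.pow_const p) _)
        _ ≤ ENNReal.ofReal (c₁ ^ r * 2 ^ q) *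
              (ENNReal.ofReal ((M + 1) ^ p) + ENNReal.ofReal ((M + 1) ^ q)) := by
            exact mul_le_mul_right (add_le_add hI₁ hI₂) _
        _ = ENNReal.ofReal (c₁ ^ r * 2 ^ q * K) := by
            rw [← ENNReal.ofReal_add (Real.rpow_nonneg hM1.le _)
              (Real.rpow_nonneg hM1.le _), ← ENNReal.ofReal_mul (by positivity)]
    have heLp : eLpNorm (fun x => g' (u x)) (ENNReal.ofReal r) volume ≤
        ENNReal.ofReal (c₁ ^ r * 2 ^ q * K) ^ (1 / r) := by
      rw [eLpNorm_eq_lintegral_rpow_enorm_toReal (by simpa using hr) ENNReal.ofReal_ne_top,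
        ENNReal.toReal_ofReal hr.le]
      exact ENNReal.rpow_le_rpow hJ (by positivity)
    have hne : ENNReal.ofReal (c₁ ^ r * 2 ^ q * K) ^ (1 / r) ≠ ⊤ :=
      (ENNReal.rpow_lt_top_of_nonneg (by positivity) ENNReal.ofReal_ne_top).ne
    refine ⟨⟨hgu.aestronglyMeasurable, lt_of_le_of_lt heLp hne.lt_top⟩, ?_⟩
    have := ENNReal.toReal_mono hne heLp
    calc (eLpNorm (fun x => g' (u x)) (ENNReal.ofReal r) volume).toReal
        ≤ (ENNReal.ofReal (c₁ ^ r * 2 ^ q * K) ^ (1 / r)).toReal := this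
      _ = (c₁ ^ r * 2 ^ q * K) ^ (1 / r) := by
          rw [← ENNReal.toReal_rpow, ENNReal.toReal_ofReal (by positivity)]
  obtain ⟨hmem₁, hb₁⟩ := key p' hp'pos hp'1 hp'2
  obtain ⟨hmem₂, hb₂⟩ := key q' hq'pos hq'1 hq'2
  exact ⟨hmem₁, hmem₂, by linarith⟩
end
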